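/- Let S be a finite set with |S| = k ≥ 3 and c ≥ 0 a real number. Then ρ_c is a t-monotone submodular function on 2^{S^±} and its base polyhedron B(ρ_c) equals B_c. -/

import Mathlib

open Finset

/-- Submodularity of a real-valued set function (with `ρ ∅ = 0`). -/
def SubmodularR {A : Type*} [DecidableEq A] (ρ : Finset A → ℝ) : Prop :=
  ρ ∅ = 0 ∧ ∀ X Y : Finset A, ρ (X ∩ Y) + ρ (X ∪ Y) ≤ ρ X + ρ Y

/-- `X̲`: remove from `X ⊆ S^±` all pairs `{i⁺, i⁻} ⊆ X`
(where `S^± = S × Bool`, `true` = `+`). -/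
def reduceSigned {S : Type*} [DecidableEq S] (X : Finset (S × Bool)) :
    Finset (S × Bool) :=
  X.filter (fun p => ¬((p.1, true) ∈ X ∧ (p.1, false) ∈ X))

/-- t-monotonicity: `ρ(X̲) ≤ ρ(X)` for all `X ⊆ S^±`. -/
def TMonoR {S : Type*} [DecidableEq S] (ρ : Finset (S × Bool) → ℝ) : Prop :=
  ∀ X : Finset (S × Bool), ρ (reduceSigned X) ≤ ρ X

/-- Membership in the base polyhedron `B(ρ)` of a real-valued set function. -/
def InBaseR {A : Type*} [Fintype A] (ρ : Finset A → ℝ) (x : A → ℝ) : Prop :=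
  (∑ p, x p) = ρ univ ∧ ∀ X : Finset A, (∑ p ∈ X, x p) ≤ ρ X

/-- The lift `B_c ⊆ ℝ^{S^±}` of the node-flowing polytope. -/
def liftedNodeFlowing (S : Type*) [Fintype S] [DecidableEq S] (c : ℝ) :
    Set (S × Bool → ℝ) :=
  {x | (∑ p : S × Bool, x p) = 0 ∧
    (∑ i : S, x (i, true)) ≤ 2 * c ∧
    (∀ i : S, x (i, true) + ∑ j ∈ univ.erase i, x (j, false) ≤ 0) ∧
    (∀ i : S, 0 ≤ x (i, true) ∧ x (i, true) ≤ c) ∧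
    (∀ i : S, -c ≤ x (i, false) ∧ x (i, false) ≤ 0)}

/-- The submodular function `ρ_c` describing `B_c`: with `a = |X⁺|`, `b = |X⁻|`,
`ρ_c(X) = 2c` for type 22 sets (`a ≥ 2`, `b ≤ k−2`), `ρ_c(X) = c` for types 21, 12 and 11
(the latter excluding type 11*, i.e. `X = {i⁺} ∪ (S⁻ ∖ {i⁻})`), and `ρ_c(X) = 0` otherwise. -/
noncomputable def rhoNF (S : Type*) [Fintype S] [DecidableEq S] (c : ℝ)
    (X : Finset (S × Bool)) : ℝ :=
  if 2 ≤ (X.filter (fun p => p.2 = true)).card ∧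
      (X.filter (fun p => p.2 = false)).card ≤ Fintype.card S - 2 then 2 * c
  else if (2 ≤ (X.filter (fun p => p.2 = true)).card ∧
        (X.filter (fun p => p.2 = false)).card = Fintype.card S - 1) ∨
      ((X.filter (fun p => p.2 = true)).card = 1 ∧
        (X.filter (fun p => p.2 = false)).card ≤ Fintype.card S - 2) ∨
      ((X.filter (fun p => p.2 = true)).card = 1 ∧
        (X.filter (fun p => p.2 = false)).card = Fintype.card S - 1 ∧
        ∃ i : S, (i, true) ∈ X ∧ (i, false) ∈ X) then c
  else 0

/-! ### Auxiliary development -/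

section NFAux
variable {S : Type*} [Fintype S] [DecidableEq S]

/-- The set of "positive" nodes of `X`. -/
def posSetNF (X : Finset (S × Bool)) : Finset S := univ.filter fun i => (i, true) ∈ X

/-- The set of "negative" nodes of `X`. -/
def negSetNF (X : Finset (S × Bool)) : Finset S := univ.filter fun i => (i, false) ∈ X

@[simp] lemma mem_posSetNF {X : Finset (S × Bool)} {i : S} :
    i ∈ posSetNF X ↔ (i, true) ∈ X := by simp [posSetNF]

@[simp] lemma mem_negSetNF {X : Finset (S × Bool)} {i : S} :
    i ∈ negSetNF X ↔ (i, false) ∈ X := by simp [negSetNF]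

lemma filter_true_eqNF (X : Finset (S × Bool)) :
    X.filter (fun p => p.2 = true) = (posSetNF X).image (fun i => (i, true)) := by
  ext ⟨i, b⟩
  simp only [mem_filter, mem_image, mem_posSetNF, Prod.mk.injEq]
  cases b <;> simp

lemma filter_false_eqNF (X : Finset (S × Bool)) :
    X.filter (fun p => p.2 = false) = (negSetNF X).image (fun i => (i, false)) := by
  ext ⟨i, b⟩
  simp only [mem_filter, mem_image, mem_negSetNF, Prod.mk.injEq]
  cases b <;> simp

lemma card_filter_trueNF (X : Finset (S × Bool)) :
    (X.filter (fun p => p.2 = true)).card = (posSetNF X).card := by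
  rw [filter_true_eqNF, card_image_of_injective]
  intro a b h; simpa using h

lemma card_filter_falseNF (X : Finset (S × Bool)) :
    (X.filter (fun p => p.2 = false)).card = (negSetNF X).card := by
  rw [filter_false_eqNF, card_image_of_injective]
  intro a b h; simpa using h

lemma matched_iffNF (X : Finset (S × Bool)) :
    (∃ i : S, (i, true) ∈ X ∧ (i, false) ∈ X) ↔ (posSetNF X ∩ negSetNF X).Nonempty := by
  simp [Finset.Nonempty, mem_inter]

lemma posSetNF_inter (X Y : Finset (S × Bool)) :
    posSetNF (X ∩ Y) = posSetNF X ∩ posSetNF Y := by ext i; simp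

lemma posSetNF_union (X Y : Finset (S × Bool)) :
    posSetNF (X ∪ Y) = posSetNF X ∪ posSetNF Y := by ext i; simp

lemma negSetNF_inter (X Y : Finset (S × Bool)) :
    negSetNF (X ∩ Y) = negSetNF X ∩ negSetNF Y := by ext i; simp

lemma negSetNF_union (X Y : Finset (S × Bool)) :
    negSetNF (X ∪ Y) = negSetNF X ∪ negSetNF Y := by ext i; simp

lemma posSetNF_reduce (X : Finset (S × Bool)) :
    posSetNF (reduceSigned X) = posSetNF X \ (posSetNF X ∩ negSetNF X) := by
  ext i; simp [reduceSigned, mem_sdiff]; tauto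

lemma negSetNF_reduce (X : Finset (S × Bool)) :
    negSetNF (reduceSigned X) = negSetNF X \ (posSetNF X ∩ negSetNF X) := by
  ext i; simp [reduceSigned, mem_sdiff]; tauto

end NFAux

/-- Integer version of `ρ_c` expressed through the node sets. -/
def etaNF (S : Type*) [Fintype S] [DecidableEq S] (A B : Finset S) : ℤ :=
  if 2 ≤ A.card ∧ B.card ≤ Fintype.card S - 2 then 2
  else if (2 ≤ A.card ∧ B.card = Fintype.card S - 1) ∨
      (A.card = 1 ∧ B.card ≤ Fintype.card S - 2) ∨
      (A.card = 1 ∧ B.card = Fintype.card S - 1 ∧ (A ∩ B).Nonempty) then 1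
  else 0

section NFMain
variable {S : Type*} [Fintype S] [DecidableEq S]

lemma rhoNF_eq_etaNF (c : ℝ) (X : Finset (S × Bool)) :
    rhoNF S c X = c * etaNF S (posSetNF X) (negSetNF X) := by
  unfold rhoNF etaNF
  rw [card_filter_trueNF, card_filter_falseNF]
  simp only [matched_iffNF]
  split_ifs <;> push_cast <;> ring

lemma etaNF_eq (hk : 3 ≤ Fintype.card S) (A B : Finset S) :
    etaNF S A B = min (min (A.card : ℤ) ((Fintype.card S : ℤ) - B.card)) 2
      - (if A.card = 1 ∧ B.card = Fintype.card S - 1 ∧ A ∩ B = ∅ then 1 else 0) := by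
  have hB : B.card ≤ Fintype.card S := B.card_le_univ
  have hA : A.card ≤ Fintype.card S := A.card_le_univ
  unfold etaNF
  rcases eq_or_ne (A ∩ B) ∅ with he | he
  · simp only [he, and_true, Finset.not_nonempty_empty, and_false, or_false]
    split_ifs <;> omega
  · have : (A ∩ B).Nonempty := Finset.nonempty_iff_ne_empty.2 he
    simp only [he, and_false, if_false, this, and_true]
    split_ifs <;> omega

lemma etaNF_nonneg (A B : Finset S) : 0 ≤ etaNF S A B := by
  unfold etaNF; split_ifs <;> omega

lemma etaNF_eval_chi (hk : 3 ≤ Fintype.card S) {A B : Finset S}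
    (h : A.card = 1 ∧ B.card = Fintype.card S - 1 ∧ A ∩ B = ∅) : etaNF S A B = 0 := by
  rw [etaNF_eq hk, if_pos h]
  obtain ⟨h1, h2, -⟩ := h
  omega

lemma etaNF_eval_nochi (hk : 3 ≤ Fintype.card S) {A B : Finset S}
    (h : ¬(A.card = 1 ∧ B.card = Fintype.card S - 1 ∧ A ∩ B = ∅)) :
    etaNF S A B = min (min (A.card : ℤ) ((Fintype.card S : ℤ) - B.card)) 2 := by
  rw [etaNF_eq hk, if_neg h]; ring

lemma etaNF_empty_left (B : Finset S) : etaNF S ∅ B = 0 := by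
  unfold etaNF; simp

lemma etaNF_univ_right (hk : 3 ≤ Fintype.card S) (A : Finset S) :
    etaNF S A univ = 0 := by
  unfold etaNF
  rw [if_neg, if_neg]
  · rintro (⟨-, h⟩ | ⟨-, h⟩ | ⟨-, h, -⟩) <;> (rw [card_univ] at h; omega)
  · rintro ⟨-, h⟩; rw [card_univ] at h; omega

lemma missing_uniqueNF {B : Finset S} {i : S} (h : i ∉ B)
    (hcard : B.card = Fintype.card S - 1) : B = univ.erase i := by
  apply eq_of_subset_of_card_le
  · intro j hj
    exact mem_erase.2 ⟨fun hji => h (hji ▸ hj), mem_univ j⟩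
  · rw [card_erase_of_mem (mem_univ i), card_univ, hcard]

lemma etaNF_singleton_erase (hk : 3 ≤ Fintype.card S) (i : S) :
    etaNF S {i} (univ.erase i) = 0 := by
  apply etaNF_eval_chi hk
  refine ⟨card_singleton i, by rw [card_erase_of_mem (mem_univ i), card_univ], ?_⟩
  ext j; simp [mem_erase]

lemma etaNF_special (hk : 3 ≤ Fintype.card S) (i : S) (A B : Finset S) :
    etaNF S ({i} ∩ A) ((univ.erase i) ∩ B) + etaNF S ({i} ∪ A) ((univ.erase i) ∪ B)
      ≤ etaNF S A B := by
  have hkZ : (3:ℤ) ≤ Fintype.card S := by exact_mod_cast hk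
  have hBk : B.card ≤ Fintype.card S := B.card_le_univ
  by_cases hiA : i ∈ A <;> by_cases hiB : i ∈ B
  · -- i ∈ A, i ∈ B
    have h1 : ({i} : Finset S) ∩ A = {i} := by
      ext j; simp; rintro rfl; exact hiA
    have h2 : (univ.erase i) ∩ B = B.erase i := by
      ext j; simp [mem_erase]
    have h3 : ({i} : Finset S) ∪ A = A := by
      ext j; simp; rintro rfl; exact hiA
    have h4 : (univ.erase i) ∪ B = univ := by
      ext j; simp [mem_erase]
      rcases eq_or_ne j i with rfl | hne
      · exact Or.inr hiB
      · exact Or.inl hne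
    rw [h1, h2, h3, h4, etaNF_univ_right hk]
    have hb1 : (B.erase i).card = B.card - 1 := card_erase_of_mem hiB
    rcases eq_or_lt_of_le hBk with hb | hb
    · have : etaNF S {i} (B.erase i) = 0 := by
        apply etaNF_eval_chi hk
        refine ⟨card_singleton i, by omega, ?_⟩
        ext j; simp [mem_erase]
      rw [this]
      simpa using etaNF_nonneg A B
    · have hb' : B.card ≤ Fintype.card S - 1 := by omega
      have e1 : etaNF S {i} (B.erase i) =
          min (min ((1:ℤ)) ((Fintype.card S : ℤ) - (B.card - 1))) 2 := by
        rw [etaNF_eval_nochi hk (by rw [hb1, card_singleton]; omega), hb1, card_singleton]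
        push_cast [hb1]
        omega
      have e2 : etaNF S A B = min (min ((A.card:ℤ)) ((Fintype.card S : ℤ) - B.card)) 2 := by
        apply etaNF_eval_nochi hk
        rintro ⟨-, -, hd⟩
        have : i ∈ A ∩ B := mem_inter.2 ⟨hiA, hiB⟩
        rw [hd] at this; exact absurd this (notMem_empty i)
      have ha : 1 ≤ A.card := card_pos.2 ⟨i, hiA⟩
      rw [e1, e2]
      omega
  · -- i ∈ A, i ∉ B
    have hBsub : B ⊆ univ.erase i := fun j hj =>
      mem_erase.2 ⟨fun hji => hiB (hji ▸ hj), mem_univ j⟩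
    have h1 : ({i} : Finset S) ∩ A = {i} := by
      ext j; simp; rintro rfl; exact hiA
    have h2 : (univ.erase i) ∩ B = B := inter_eq_right.2 hBsub
    have h3 : ({i} : Finset S) ∪ A = A := by
      ext j; simp; rintro rfl; exact hiA
    have h4 : (univ.erase i) ∪ B = univ.erase i := union_eq_left.2 hBsub
    rw [h1, h2, h3, h4]
    have hbk : B.card ≤ Fintype.card S - 1 := by
      have := card_le_card hBsub
      rw [card_erase_of_mem (mem_univ i), card_univ] at this; exact this
    have ha : 1 ≤ A.card := card_pos.2 ⟨i, hiA⟩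
    rcases eq_or_lt_of_le ha with ha1 | ha2
    · have : A = {i} := by
        obtain ⟨j, hj⟩ := card_eq_one.1 ha1.symm
        rw [hj] at hiA ⊢
        simp at hiA; rw [hiA]
      rw [this, etaNF_singleton_erase hk]
      omega
    · rcases eq_or_lt_of_le hbk with hb1 | hb2
      · have hBe : B = univ.erase i := missing_uniqueNF hiB hb1
        rw [hBe, etaNF_singleton_erase hk, ← hBe]
        omega
      · have hb' : B.card ≤ Fintype.card S - 2 := by omega
        have e1 : etaNF S {i} B =
            min (min ((1:ℤ)) ((Fintype.card S : ℤ) - B.card)) 2 := by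
          rw [etaNF_eval_nochi hk (by rw [card_singleton]; omega), card_singleton]
          norm_num
        have e2 : etaNF S A (univ.erase i) =
            min (min ((A.card:ℤ)) ((Fintype.card S : ℤ) - (Fintype.card S - 1 : ℕ))) 2 := by
          rw [etaNF_eval_nochi hk (by omega),
            card_erase_of_mem (mem_univ i), card_univ]
        have e3 : etaNF S A B = min (min ((A.card:ℤ)) ((Fintype.card S : ℤ) - B.card)) 2 :=
          etaNF_eval_nochi hk (by omega)
        rw [e1, e2, e3]
        omega
  · -- i ∉ A, i ∈ B
    have h1 : ({i} : Finset S) ∩ A = ∅ := by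
      ext j; simp; rintro rfl; exact hiA
    have h4 : (univ.erase i) ∪ B = univ := by
      ext j; simp [mem_erase]
      rcases eq_or_ne j i with rfl | hne
      · exact Or.inr hiB
      · exact Or.inl hne
    rw [h1, h4, etaNF_empty_left, etaNF_univ_right hk]
    simpa using etaNF_nonneg A B
  · -- i ∉ A, i ∉ B
    have hBsub : B ⊆ univ.erase i := fun j hj =>
      mem_erase.2 ⟨fun hji => hiB (hji ▸ hj), mem_univ j⟩
    have h1 : ({i} : Finset S) ∩ A = ∅ := by
      ext j; simp; rintro rfl; exact hiA
    have h4 : (univ.erase i) ∪ B = univ.erase i := union_eq_left.2 hBsub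
    rw [h1, h4, etaNF_empty_left]
    have hbk : B.card ≤ Fintype.card S - 1 := by
      have := card_le_card hBsub
      rw [card_erase_of_mem (mem_univ i), card_univ] at this; exact this
    rcases A.eq_empty_or_nonempty with rfl | hA
    · have : ({i} : Finset S) ∪ ∅ = {i} := by simp
      rw [this, etaNF_singleton_erase hk]
      simpa using etaNF_nonneg ∅ B
    · have ha : 1 ≤ A.card := card_pos.2 hA
      have hins : ({i} : Finset S) ∪ A = insert i A := by
        rw [← insert_eq]
      have hcard : (({i} : Finset S) ∪ A).card = A.card + 1 := by
        rw [hins, card_insert_of_notMem hiA]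
      have e1 : etaNF S ({i} ∪ A) (univ.erase i) =
          min (min ((A.card:ℤ) + 1) ((Fintype.card S : ℤ) - (Fintype.card S - 1 : ℕ))) 2 := by
        rw [etaNF_eval_nochi hk (by rw [hcard]; omega),
          card_erase_of_mem (mem_univ i), card_univ, hcard]
        push_cast; ring_nf
      have e2 : etaNF S A B = min (min ((A.card:ℤ)) ((Fintype.card S : ℤ) - B.card)) 2 := by
        apply etaNF_eval_nochi hk
        rintro ⟨ha1, hb1, hd⟩
        have hBe : B = univ.erase i := missing_uniqueNF hiB hb1
        obtain ⟨j, hj⟩ := card_eq_one.1 ha1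
        have hji : j ≠ i := by rintro rfl; rw [hj] at hiA; simp at hiA
        have : j ∈ A ∩ B := by
          rw [hj, hBe]; simp [mem_erase, hji]
        rw [hd] at this; exact absurd this (notMem_empty j)
      rw [e1, e2]
      omega

lemma etaNF_submod_special (hk : 3 ≤ Fintype.card S) {A1 B1 : Finset S}
    (h1 : A1.card = 1 ∧ B1.card = Fintype.card S - 1 ∧ A1 ∩ B1 = ∅) (A2 B2 : Finset S) :
    etaNF S (A1 ∩ A2) (B1 ∩ B2) + etaNF S (A1 ∪ A2) (B1 ∪ B2) ≤ etaNF S A2 B2 := by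
  obtain ⟨ha, hb, hd⟩ := h1
  obtain ⟨i, rfl⟩ := card_eq_one.1 ha
  have hiB : i ∉ B1 := by
    intro h
    have : i ∈ ({i} : Finset S) ∩ B1 := mem_inter.2 ⟨mem_singleton_self i, h⟩
    rw [hd] at this; exact absurd this (notMem_empty i)
  have : B1 = univ.erase i := missing_uniqueNF hiB hb
  subst this
  exact etaNF_special hk i A2 B2

lemma etaNF_submod (hk : 3 ≤ Fintype.card S) (A1 B1 A2 B2 : Finset S) :
    etaNF S (A1 ∩ A2) (B1 ∩ B2) + etaNF S (A1 ∪ A2) (B1 ∪ B2)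
      ≤ etaNF S A1 B1 + etaNF S A2 B2 := by
  by_cases h1 : A1.card = 1 ∧ B1.card = Fintype.card S - 1 ∧ A1 ∩ B1 = ∅
  · rw [etaNF_eval_chi hk h1]
    have := etaNF_submod_special hk h1 A2 B2
    omega
  · by_cases h2 : A2.card = 1 ∧ B2.card = Fintype.card S - 1 ∧ A2 ∩ B2 = ∅
    · rw [etaNF_eval_chi hk h2]
      rw [inter_comm A1 A2, inter_comm B1 B2, union_comm A1 A2, union_comm B1 B2]
      have := etaNF_submod_special hk h2 A1 B1
      omega
    · rw [etaNF_eval_nochi hk h1, etaNF_eval_nochi hk h2,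
        etaNF_eq hk (A1 ∩ A2), etaNF_eq hk (A1 ∪ A2)]
      have hA : (A1 ∩ A2).card + (A1 ∪ A2).card = A1.card + A2.card := by
        rw [add_comm]; exact card_union_add_card_inter A1 A2
      have hB : (B1 ∩ B2).card + (B1 ∪ B2).card = B1.card + B2.card := by
        rw [add_comm]; exact card_union_add_card_inter B1 B2
      have m1 : (A1 ∩ A2).card ≤ A1.card := card_le_card inter_subset_left
      have m2 : (A1 ∩ A2).card ≤ A2.card := card_le_card inter_subset_right
      have m3 : A1.card ≤ (A1 ∪ A2).card := card_le_card subset_union_left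
      have m4 : B1.card ≤ (B1 ∪ B2).card := card_le_card subset_union_left
      have m5 : (B1 ∩ B2).card ≤ B1.card := card_le_card inter_subset_left
      have m6 : (B1 ∩ B2).card ≤ B2.card := card_le_card inter_subset_right
      have m7 : A2.card ≤ (A1 ∪ A2).card := card_le_card subset_union_right
      have m8 : B2.card ≤ (B1 ∪ B2).card := card_le_card subset_union_right
      have u1 : (A1 ∪ A2).card ≤ Fintype.card S := card_le_univ _
      have u2 : (B1 ∪ B2).card ≤ Fintype.card S := card_le_univ _
      set e1 := (if (A1 ∩ A2).card = 1 ∧ (B1 ∩ B2).card = Fintype.card S - 1 ∧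
          (A1 ∩ A2) ∩ (B1 ∩ B2) = ∅ then (1:ℤ) else 0) with he1
      set e2 := (if (A1 ∪ A2).card = 1 ∧ (B1 ∪ B2).card = Fintype.card S - 1 ∧
          (A1 ∪ A2) ∩ (B1 ∪ B2) = ∅ then (1:ℤ) else 0) with he2
      have h01 : 0 ≤ e1 := by rw [he1]; split_ifs <;> norm_num
      have h02 : 0 ≤ e2 := by rw [he2]; split_ifs <;> norm_num
      omega

lemma etaNF_tmono (hk : 3 ≤ Fintype.card S) (P N : Finset S) :
    etaNF S (P \ (P ∩ N)) (N \ (P ∩ N)) ≤ etaNF S P N := by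
  rcases (P ∩ N).eq_empty_or_nonempty with he | hm
  · rw [he, sdiff_empty, sdiff_empty]
  · have hnch : ¬(P.card = 1 ∧ N.card = Fintype.card S - 1 ∧ P ∩ N = ∅) := by
      rintro ⟨-, -, hd⟩
      rw [hd] at hm; exact absurd hm (Finset.not_nonempty_empty)
    rw [etaNF_eval_nochi hk hnch, etaNF_eq hk]
    have c1 : (P \ (P ∩ N)).card = P.card - (P ∩ N).card :=
      by rw [card_sdiff, inter_eq_left.2 inter_subset_left]
    have c2 : (N \ (P ∩ N)).card = N.card - (P ∩ N).card :=
      by rw [card_sdiff, inter_eq_left.2 inter_subset_right]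
    have hm1 : 1 ≤ (P ∩ N).card := card_pos.2 hm
    have hs1 : (P ∩ N).card ≤ P.card := card_le_card inter_subset_left
    have hs2 : (P ∩ N).card ≤ N.card := card_le_card inter_subset_right
    have hu : (P ∪ N).card + (P ∩ N).card = P.card + N.card :=
      card_union_add_card_inter P N
    have hu2 : (P ∪ N).card ≤ Fintype.card S := card_le_univ _
    have hNk : N.card ≤ Fintype.card S := card_le_univ _
    set e := (if (P \ (P ∩ N)).card = 1 ∧ (N \ (P ∩ N)).card = Fintype.card S - 1 ∧
        (P \ (P ∩ N)) ∩ (N \ (P ∩ N)) = ∅ then (1:ℤ) else 0) with he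
    have h0 : 0 ≤ e := by rw [he]; split_ifs <;> norm_num
    omega

/-- Embedding a pair of node sets as a signed set. -/
def embNF (A B : Finset S) : Finset (S × Bool) :=
  A.image (fun i => (i, true)) ∪ B.image (fun i => (i, false))

@[simp] lemma posSetNF_emb (A B : Finset S) : posSetNF (embNF A B) = A := by
  ext i; simp [embNF]

@[simp] lemma negSetNF_emb (A B : Finset S) : negSetNF (embNF A B) = B := by
  ext i; simp [embNF]

lemma emb_posnegNF (X : Finset (S × Bool)) : embNF (posSetNF X) (negSetNF X) = X := by
  ext ⟨i, b⟩; cases b <;> simp [embNF]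

lemma sum_embNF (x : S × Bool → ℝ) (A B : Finset S) :
    ∑ p ∈ embNF A B, x p = ∑ i ∈ A, x (i, true) + ∑ i ∈ B, x (i, false) := by
  unfold embNF
  rw [sum_union, sum_image, sum_image]
  · intro a _ b _ h; simpa using h
  · intro a _ b _ h; simpa using h
  · rw [disjoint_left]
    rintro ⟨i, b⟩ h1 h2
    simp at h1 h2
    obtain ⟨a, -, -, hb1⟩ := h1
    obtain ⟨a', -, -, hb2⟩ := h2

lemma sum_univ_prodNF (x : S × Bool → ℝ) :
    ∑ p : S × Bool, x p = ∑ i : S, x (i, true) + ∑ i : S, x (i, false) := by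
  have : (univ : Finset (S × Bool)) = embNF univ univ := by
    ext ⟨i, b⟩; cases b <;> simp [embNF]
  rw [this, sum_embNF]

lemma rhoNF_univ (hk : 3 ≤ Fintype.card S) (c : ℝ) :
    rhoNF S c (univ : Finset (S × Bool)) = 0 := by
  rw [rhoNF_eq_etaNF]
  have h1 : posSetNF (univ : Finset (S × Bool)) = univ := by ext i; simp
  have h2 : negSetNF (univ : Finset (S × Bool)) = univ := by ext i; simp
  rw [h1, h2, etaNF_univ_right hk]
  simp

end NFMain
/-- **`ρ_c` is a t-monotone submodular function with base polyhedron `B_c`.** -/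
theorem rhoNF_tmono_submodular_base (S : Type*) [Fintype S] [DecidableEq S]
    (hk : 3 ≤ Fintype.card S) (c : ℝ) (hc : 0 ≤ c) :
    SubmodularR (rhoNF S c) ∧ TMonoR (rhoNF S c) ∧
      {x : S × Bool → ℝ | InBaseR (rhoNF S c) x} = liftedNodeFlowing S c := by
  refine ⟨⟨?_, ?_⟩, ?_, ?_⟩
  · -- ρ ∅ = 0
    rw [rhoNF_eq_etaNF]
    have h1 : posSetNF (∅ : Finset (S × Bool)) = ∅ := by ext i; simp
    have h2 : negSetNF (∅ : Finset (S × Bool)) = ∅ := by ext i; simp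
    rw [h1, h2, etaNF_empty_left]
    simp
  · -- submodularity
    intro X Y
    rw [rhoNF_eq_etaNF, rhoNF_eq_etaNF, rhoNF_eq_etaNF, rhoNF_eq_etaNF,
      posSetNF_inter, posSetNF_union, negSetNF_inter, negSetNF_union]
    have h := etaNF_submod hk (posSetNF X) (negSetNF X) (posSetNF Y) (negSetNF Y)
    have h' : ((etaNF S (posSetNF X ∩ posSetNF Y) (negSetNF X ∩ negSetNF Y) : ℤ) : ℝ)
        + ((etaNF S (posSetNF X ∪ posSetNF Y) (negSetNF X ∪ negSetNF Y) : ℤ) : ℝ)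
        ≤ ((etaNF S (posSetNF X) (negSetNF X) : ℤ) : ℝ)
          + ((etaNF S (posSetNF Y) (negSetNF Y) : ℤ) : ℝ) := by exact_mod_cast h
    nlinarith [h', hc]
  · -- t-monotonicity
    intro X
    rw [rhoNF_eq_etaNF, rhoNF_eq_etaNF, posSetNF_reduce, negSetNF_reduce]
    have h := etaNF_tmono hk (posSetNF X) (negSetNF X)
    have h' : ((etaNF S (posSetNF X \ (posSetNF X ∩ negSetNF X))
        (negSetNF X \ (posSetNF X ∩ negSetNF X)) : ℤ) : ℝ)
        ≤ ((etaNF S (posSetNF X) (negSetNF X) : ℤ) : ℝ) := by exact_mod_cast h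
    exact mul_le_mul_of_nonneg_left h' hc
  · -- base polyhedron
    ext x
    simp only [Set.mem_setOf_eq]
    constructor
    · rintro ⟨hsum, hle⟩
      have htot : ∑ p : S × Bool, x p = 0 := by rw [hsum, rhoNF_univ hk]
      have htot' : ∑ i : S, x (i, true) + ∑ i : S, x (i, false) = 0 := by
        rw [← sum_univ_prodNF]; exact htot
      refine ⟨htot, ?_, ?_, ?_, ?_⟩
      · -- ∑ x⁺ ≤ 2c
        have h := hle (embNF univ ∅)
        rw [sum_embNF, rhoNF_eq_etaNF, posSetNF_emb, negSetNF_emb, sum_empty] at h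
        have he : etaNF S (univ : Finset S) ∅ = 2 := by
          rw [etaNF_eval_nochi hk (by rintro ⟨h1, -, -⟩; rw [card_univ] at h1; omega),
            card_univ, card_empty]
          omega
        rw [he] at h
        push_cast at h
        linarith
      · -- node constraints
        intro i
        have h := hle (embNF {i} (univ.erase i))
        rw [sum_embNF, rhoNF_eq_etaNF, posSetNF_emb, negSetNF_emb, sum_singleton,
          etaNF_singleton_erase hk] at h
        simpa using h
      · intro i
        constructor
        · -- 0 ≤ x(i,true)
          have h := hle (embNF (univ.erase i) univ)
          rw [sum_embNF, rhoNF_eq_etaNF, posSetNF_emb, negSetNF_emb,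
            etaNF_univ_right hk] at h
          have hsp : ∑ j ∈ univ.erase i, x (j, true) + x (i, true) = ∑ j : S, x (j, true) :=
            sum_erase_add univ _ (mem_univ i)
          push_cast at h
          linarith
        · -- x(i,true) ≤ c
          have h := hle (embNF {i} ∅)
          rw [sum_embNF, rhoNF_eq_etaNF, posSetNF_emb, negSetNF_emb, sum_singleton,
            sum_empty] at h
          have he : etaNF S ({i} : Finset S) ∅ = 1 := by
            rw [etaNF_eval_nochi hk (by rintro ⟨-, h1, -⟩; rw [card_empty] at h1; omega),
              card_singleton, card_empty]
            omega
          rw [he] at h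
          push_cast at h
          linarith
      · intro i
        constructor
        · -- -c ≤ x(i,false)
          have h := hle (embNF univ (univ.erase i))
          rw [sum_embNF, rhoNF_eq_etaNF, posSetNF_emb, negSetNF_emb] at h
          have he : etaNF S (univ : Finset S) (univ.erase i) = 1 := by
            rw [etaNF_eval_nochi hk (by rintro ⟨h1, -, -⟩; rw [card_univ] at h1; omega),
              card_univ, card_erase_of_mem (mem_univ i), card_univ]
            omega
          rw [he] at h
          have hsp : ∑ j ∈ univ.erase i, x (j, false) + x (i, false) = ∑ j : S, x (j, false) :=
            sum_erase_add univ _ (mem_univ i)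
          push_cast at h
          linarith
        · -- x(i,false) ≤ 0
          have h := hle (embNF ∅ {i})
          rw [sum_embNF, rhoNF_eq_etaNF, posSetNF_emb, negSetNF_emb, sum_singleton,
            sum_empty, etaNF_empty_left] at h
          push_cast at h
          linarith
    · rintro ⟨h0, h2c, hnode, hpos, hneg⟩
      have htot' : ∑ i : S, x (i, true) + ∑ i : S, x (i, false) = 0 := by
        rw [← sum_univ_prodNF]; exact h0
      constructor
      · rw [rhoNF_univ hk]; exact h0
      · intro X
        have hX : ∑ p ∈ X, x p
            = ∑ i ∈ posSetNF X, x (i, true) + ∑ i ∈ negSetNF X, x (i, false) := by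
          conv_lhs => rw [← emb_posnegNF X]
          rw [sum_embNF]
        rw [hX, rhoNF_eq_etaNF]
        set A := posSetNF X with hA
        set B := negSetNF X with hB
        have hupA : ∑ i ∈ A, x (i, true) ≤ ∑ i : S, x (i, true) :=
          sum_le_sum_of_subset_of_nonneg (subset_univ A) (fun i _ _ => (hpos i).1)
        have hAnn : 0 ≤ ∑ i ∈ A, x (i, true) := sum_nonneg (fun i _ => (hpos i).1)
        have hBnp : ∑ i ∈ B, x (i, false) ≤ 0 := sum_nonpos (fun i _ => (hneg i).2)
        have hBk : B.card ≤ Fintype.card S := card_le_univ B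
        unfold etaNF
        split_ifs with hx1 hx2
        · push_cast; linarith
        · rcases hx2 with ⟨ha2, hb⟩ | ⟨ha1, -⟩ | ⟨ha1, -, -⟩
          · have hne : B ≠ univ := by
              intro h; rw [h, card_univ] at hb; omega
            obtain ⟨i, hi⟩ : ∃ i, i ∉ B := by
              by_contra hcon; push_neg at hcon
              exact hne (eq_univ_iff_forall.2 hcon)
            have hBe : B = univ.erase i := missing_uniqueNF hi hb
            have hsp : ∑ j ∈ univ.erase i, x (j, false) + x (i, false)
                = ∑ j : S, x (j, false) := sum_erase_add univ _ (mem_univ i)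
            rw [hBe]
            push_cast
            linarith [(hneg i).1]
          · obtain ⟨j, hj⟩ := card_eq_one.1 ha1
            rw [hj, sum_singleton]
            push_cast
            linarith [(hpos j).2]
          · obtain ⟨j, hj⟩ := card_eq_one.1 ha1
            rw [hj, sum_singleton]
            push_cast
            linarith [(hpos j).2]
        · rcases Nat.eq_zero_or_pos A.card with ha0 | hapos
          · rw [card_eq_zero.1 ha0, sum_empty]
            push_cast
            linarith
          · by_cases hbk : B.card = Fintype.card S
            · have hBu : B = univ :=
                eq_of_subset_of_card_le (subset_univ B) (by rw [card_univ]; omega)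
              rw [hBu]
              push_cast
              linarith
            · have ha1 : A.card = 1 := by
                by_contra hne1
                have h2a : 2 ≤ A.card := by omega
                exact hx2 (Or.inl ⟨h2a, by
                  have hbge : ¬(B.card ≤ Fintype.card S - 2) := fun h => hx1 ⟨h2a, h⟩
                  omega⟩)
              have hbK : B.card = Fintype.card S - 1 := by
                have h1 : ¬(B.card ≤ Fintype.card S - 2) := fun h =>
                  hx2 (Or.inr (Or.inl ⟨ha1, h⟩))
                omega
              have hd : ¬(A ∩ B).Nonempty := fun h =>
                hx2 (Or.inr (Or.inr ⟨ha1, hbK, h⟩))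
              obtain ⟨j, hj⟩ := card_eq_one.1 ha1
              have hjB : j ∉ B := by
                intro h
                exact hd ⟨j, mem_inter.2 ⟨by rw [hj]; exact mem_singleton_self j, h⟩⟩
              have hBe : B = univ.erase j := missing_uniqueNF hjB hbK
              rw [hj, hBe, sum_singleton]
              push_cast
              linarith [hnode j]
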